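/- Let k be a field and F a finite subset of R = k[X_0,...,X_{m-1}] generating ideal I. The last fall degree d_F, defined as the minimal d in Z_{≥0} ∪ {∞} such that for all f in I one has f in V_{F, max(d, deg f)}, is finite: d_F is a nonnegative integer. -/

import Mathlib

open MvPolynomial

/-- `VSpace F i` is the smallest `k`-subspace of `k[X_0,...,X_{m-1}]` containing all
`f ∈ F` of total degree at most `i`, and closed under multiplication by arbitrary
polynomials as long as the product has total degree at most `i`. -/
noncomputable def VSpace {k : Type*} [Field k] {m : ℕ} (F : Set (MvPolynomial (Fin m) k)) (i : ℕ) :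
    Submodule k (MvPolynomial (Fin m) k) :=
  sInf {W : Submodule k (MvPolynomial (Fin m) k) |
    (∀ f ∈ F, f.totalDegree ≤ i → f ∈ W) ∧
    ∀ g ∈ W, ∀ h : MvPolynomial (Fin m) k, (h * g).totalDegree ≤ i → h * g ∈ W}


section Aux

open MvPolynomial

variable {k : Type*} [Field k] {m : ℕ}

local notation "R" => MvPolynomial (Fin m) k

lemma hc_top_ne_zero {f : R} (hf : f ≠ 0) :
    homogeneousComponent f.totalDegree f ≠ 0 := by
  obtain ⟨d, hd, hdeg⟩ := Finset.exists_mem_eq_sup f.support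
    (MvPolynomial.support_nonempty.mpr hf) (fun s => s.degree)
  intro h0
  have hdeg' : d.degree = f.totalDegree := hdeg.symm
  have : coeff d (homogeneousComponent f.totalDegree f) = coeff d f := by
    rw [coeff_homogeneousComponent, if_pos hdeg']
  rw [h0] at this
  exact (mem_support_iff.mp hd) (by simpa using this.symm)

lemma hc_mul {g : R} {d : ℕ} (hg : g.IsHomogeneous d) (a : R) (n : ℕ) :
    homogeneousComponent n (a * g) =
      if d ≤ n then homogeneousComponent (n - d) a * g else 0 := by
  set N := max (a.totalDegree + 1) (n + 1) with hN
  have ha : ∑ i ∈ Finset.range N, homogeneousComponent i a = a := by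
    refine Eq.trans ?_ (sum_homogeneousComponent a)
    refine (Finset.sum_subset (Finset.range_subset_range.mpr (le_max_left _ _)) ?_).symm
    intro i _ hi
    rw [Finset.mem_range] at hi
    exact homogeneousComponent_eq_zero i a (by omega)
  conv_lhs => rw [← ha, Finset.sum_mul, map_sum]
  have key : ∀ i ∈ Finset.range N,
      homogeneousComponent n (homogeneousComponent i a * g) =
        if i = n - d ∧ d ≤ n then homogeneousComponent i a * g else 0 := by
    intro i _
    have hmem : homogeneousComponent i a * g ∈ homogeneousSubmodule (Fin m) k (i + d) :=
      (mem_homogeneousSubmodule _ _).mpr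
        ((homogeneousComponent_isHomogeneous i a).mul hg)
    rw [homogeneousComponent_of_mem hmem]
    congr 1
    simp only [eq_iff_iff]
    omega
  rw [Finset.sum_congr rfl key]
  by_cases hdn : d ≤ n
  · rw [if_pos hdn]
    have h2 : ∀ i ∈ Finset.range N, (if i = n - d ∧ d ≤ n then homogeneousComponent i a * g else 0)
        = if i = n - d then homogeneousComponent i a * g else 0 := by
      intro i _; simp [hdn]
    rw [Finset.sum_congr rfl h2, Finset.sum_ite_eq' (Finset.range N) (n - d)
      (fun i => homogeneousComponent i a * g), if_pos (by rw [Finset.mem_range]; omega)]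
  · rw [if_neg hdn]
    exact Finset.sum_eq_zero fun i _ => by simp [hdn]

lemma mem_VSpace_of_mem_F {F : Set R} {i : ℕ} {f : R} (hf : f ∈ F)
    (hd : f.totalDegree ≤ i) : f ∈ VSpace F i :=
  Submodule.mem_sInf.mpr fun _ hW => hW.1 f hf hd

lemma mul_mem_VSpace {F : Set R} {i : ℕ} {g : R} (hg : g ∈ VSpace F i) (h : R)
    (hd : (h * g).totalDegree ≤ i) : h * g ∈ VSpace F i :=
  Submodule.mem_sInf.mpr fun W hW => hW.2 g (Submodule.mem_sInf.mp hg W hW) h hd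

lemma VSpace_mono {F : Set R} {i j : ℕ} (hij : i ≤ j) : VSpace F i ≤ VSpace F j := by
  apply sInf_le_sInf
  rintro W ⟨h1, h2⟩
  exact ⟨fun f hf hd => h1 f hf (hd.trans hij), fun g hg h hd => h2 g hg h (hd.trans hij)⟩

lemma exists_mem_VSpace {F : Set R} {f : R} (hf : f ∈ Ideal.span F) :
    ∃ N : ℕ, f ∈ VSpace F N := by
  refine Submodule.span_induction (p := fun x _ => ∃ N, x ∈ VSpace F N)
    (fun x hx => ⟨x.totalDegree, mem_VSpace_of_mem_F hx le_rfl⟩)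
    ⟨0, Submodule.zero_mem _⟩
    (fun x y _ _ ⟨N1, h1⟩ ⟨N2, h2⟩ =>
      ⟨max N1 N2, Submodule.add_mem _ (VSpace_mono (le_max_left _ _) h1)
        (VSpace_mono (le_max_right _ _) h2)⟩) ?_ hf
  rintro a x _ ⟨N, hN⟩
  refine ⟨max N (a * x).totalDegree, ?_⟩
  have : a • x = a * x := smul_eq_mul _ _
  rw [this]
  exact mul_mem_VSpace (VSpace_mono (le_max_left _ _) hN) a (le_max_right _ _)

lemma exists_good_generators (F : Set R) :
    ∃ (T : Finset R) (gg : R → R), (∀ t ∈ T, gg t ∈ Ideal.span F) ∧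
      ∀ f ∈ Ideal.span F, ∃ b : R → R,
        f = ∑ t ∈ T, b t * gg t ∧
          ∀ t ∈ T, (b t * gg t).totalDegree ≤ f.totalDegree := by
  classical
  set I := Ideal.span F with hI
  set S : Set R := (fun f => homogeneousComponent f.totalDegree f) '' (I : Set R) with hS
  set J := Ideal.span S with hJ
  have hJfg : J.FG := (isNoetherianRing_iff_ideal_fg _).mp inferInstance J
  have key : ∃ T : Finset R, ↑T ⊆ S ∧ Ideal.span (T : Set R) = J := by
    obtain ⟨u, hu⟩ := hJfg
    have hx : ∀ x : {y // y ∈ u}, ∃ T' : Finset R, ↑T' ⊆ S ∧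
        (x : R) ∈ Ideal.span (T' : Set R) := by
      rintro ⟨x, hxu⟩
      have hxJ : x ∈ J := hu ▸ Ideal.subset_span hxu
      exact Submodule.mem_span_finite_of_mem_span hxJ
    choose T' hsub hmem using hx
    refine ⟨u.attach.biUnion T', ?_, ?_⟩
    · intro t ht
      obtain ⟨x, _, htx⟩ := Finset.mem_biUnion.mp ht
      exact hsub x htx
    · apply le_antisymm
      · rw [Ideal.span_le]
        intro t ht
        obtain ⟨x, _, htx⟩ := Finset.mem_biUnion.mp ht
        exact Ideal.subset_span (hsub x htx)
      · rw [← hu, Ideal.span_le]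
        intro x hxu
        have hsubset : (↑(T' ⟨x, hxu⟩) : Set R) ⊆ ↑(u.attach.biUnion T') := by
          intro y hy
          simp only [Finset.coe_biUnion, Set.mem_iUnion, Finset.mem_coe]
          exact ⟨⟨x, hxu⟩, Finset.mem_attach _ _, by exact_mod_cast hy⟩
        exact Ideal.span_mono hsubset (hmem ⟨x, hxu⟩)
  obtain ⟨T, hTS, hspanT⟩ := key
  have hhom : ∀ t ∈ T, t.IsHomogeneous t.totalDegree := by
    intro t ht
    obtain ⟨g, _, hgt⟩ := hTS ht
    by_cases ht0 : t = 0
    · rw [ht0]; exact isHomogeneous_zero _ _ _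
    · have h1 : t.IsHomogeneous g.totalDegree := hgt ▸ homogeneousComponent_isHomogeneous _ _
      rwa [h1.totalDegree ht0]
  have hchoice : ∀ t ∈ T, ∃ g, g ∈ I ∧ homogeneousComponent g.totalDegree g = t := by
    intro t ht
    obtain ⟨g, hg, hgt⟩ := hTS ht
    exact ⟨g, hg, hgt⟩
  choose! gg hggI hggt using hchoice
  have hgg0 : ∀ t ∈ T, t = 0 → gg t = 0 := by
    intro t ht ht0
    by_contra hne
    exact hc_top_ne_zero hne ((hggt t ht).trans ht0)
  have hggdeg : ∀ t ∈ T, t ≠ 0 → (gg t).totalDegree = t.totalDegree := by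
    intro t ht ht0
    have h1 : t.IsHomogeneous (gg t).totalDegree := by
      have h2 := homogeneousComponent_isHomogeneous (gg t).totalDegree (gg t)
      rwa [hggt t ht] at h2
    exact (h1.totalDegree ht0).symm
  refine ⟨T, gg, hggI, ?_⟩
  suffices H : ∀ n, ∀ f ∈ I, f.totalDegree ≤ n → ∃ b : R → R,
      f = ∑ t ∈ T, b t * gg t ∧ ∀ t ∈ T, (b t * gg t).totalDegree ≤ f.totalDegree by
    exact fun f hf => H f.totalDegree f hf le_rfl
  intro n
  induction n using Nat.strong_induction_on with
  | _ n IH =>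
    intro f hf hdeg
    by_cases hf0 : f = 0
    · exact ⟨0, by simp [hf0], by intro t _; simp [hf0]⟩
    rcases lt_or_eq_of_le hdeg with hlt | heq
    · exact IH f.totalDegree hlt f hf le_rfl
    set n0 := f.totalDegree with hn0
    have hlfS : homogeneousComponent n0 f ∈ S := ⟨f, hf, rfl⟩
    have hlf : homogeneousComponent n0 f ∈ Ideal.span (T : Set R) :=
      hspanT ▸ Ideal.subset_span hlfS
    obtain ⟨c, -, hc⟩ := Submodule.mem_span_finset.mp hlf
    set b : R → R := fun t =>
      if t.totalDegree ≤ n0 then homogeneousComponent (n0 - t.totalDegree) (c t) else 0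
      with hb
    have hbhom : ∀ t, t.totalDegree ≤ n0 →
        b t ∈ homogeneousSubmodule (Fin m) k (n0 - t.totalDegree) := by
      intro t hle
      simp only [hb, if_pos hle]
      exact homogeneousComponent_mem _ _
    have hstep : homogeneousComponent n0 f = ∑ t ∈ T, b t * t := by
      have h0 := congrArg (homogeneousComponent n0) hc
      rw [map_sum] at h0
      have h1 : ∀ t ∈ T, homogeneousComponent n0 (c t • t) = b t * t := by
        intro t ht
        rw [smul_eq_mul, hc_mul (hhom t ht) (c t) n0]
        by_cases hle : t.totalDegree ≤ n0
        · rw [if_pos hle]; simp [hb, if_pos hle]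
        · rw [if_neg hle]; simp [hb, hle]
      rw [Finset.sum_congr rfl h1,
        homogeneousComponent_of_mem (homogeneousComponent_mem n0 f), if_pos rfl] at h0
      exact h0.symm
    -- degree bounds for b t * gg t
    have hbound : ∀ t ∈ T, (b t * gg t).totalDegree ≤ n0 := by
      intro t ht
      by_cases ht0 : t = 0
      · simp [hgg0 t ht ht0]
      by_cases hle : t.totalDegree ≤ n0
      · have h1 : (b t).totalDegree ≤ n0 - t.totalDegree :=
          IsHomogeneous.totalDegree_le (hbhom t hle)
        have h2 := totalDegree_mul (b t) (gg t)
        rw [hggdeg t ht ht0] at h2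
        omega
      · simp [hb, hle]
    -- homogeneous component of b t * gg t
    have hcomp : ∀ t ∈ T, homogeneousComponent n0 (b t * gg t) = b t * t := by
      intro t ht
      by_cases ht0 : t = 0
      · rw [hgg0 t ht ht0, mul_zero, map_zero, ht0, mul_zero]
      have hdt := hggdeg t ht ht0
      have hsplit : gg t = t + (gg t - t) := by ring
      have hrdeg : gg t - t ≠ 0 → (gg t - t).totalDegree < t.totalDegree := by
        intro hr0
        have htle : t.totalDegree ≤ (gg t).totalDegree := hdt.ge
        have h1 : (gg t - t).totalDegree ≤ (gg t).totalDegree := by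
          have := totalDegree_add (gg t) (-t)
          rw [totalDegree_neg] at this
          simpa [sub_eq_add_neg, hdt] using this
        have h2 : homogeneousComponent (gg t).totalDegree (gg t - t) = 0 := by
          have hmem : t ∈ homogeneousSubmodule (Fin m) k (gg t).totalDegree := by
            have h3 := homogeneousComponent_mem (gg t).totalDegree (gg t)
            rwa [hggt t ht] at h3
          rw [map_sub, hggt t ht, homogeneousComponent_of_mem hmem, if_pos rfl, sub_self]
        rcases lt_or_eq_of_le h1 with h | h
        · omega
        · exact absurd (h ▸ h2) (hc_top_ne_zero hr0)
      rw [hsplit, mul_add, map_add]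
      have e1 : homogeneousComponent n0 (b t * t) = b t * t := by
        rw [hc_mul (hhom t ht) (b t) n0]
        by_cases hle : t.totalDegree ≤ n0
        · rw [if_pos hle, homogeneousComponent_of_mem (hbhom t hle), if_pos rfl]
        · rw [if_neg hle]; simp [hb, hle]
      have e2 : homogeneousComponent n0 (b t * (gg t - t)) = 0 := by
        by_cases hr0 : gg t - t = 0
        · simp [hr0]
        by_cases hle : t.totalDegree ≤ n0
        · apply homogeneousComponent_eq_zero
          have h1 : (b t).totalDegree ≤ n0 - t.totalDegree :=
            IsHomogeneous.totalDegree_le (hbhom t hle)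
          have h2 := totalDegree_mul (b t) (gg t - t)
          have h3 := hrdeg hr0
          omega
        · simp [hb, hle]
      rw [e1, e2, add_zero]
    set f' := f - ∑ t ∈ T, b t * gg t with hf'
    have hf'I : f' ∈ I := Submodule.sub_mem _ hf
      (Ideal.sum_mem _ fun t ht => Ideal.mul_mem_left _ _ (hggI t ht))
    have hf'deg : f'.totalDegree ≤ n0 := by
      have h1 : (∑ t ∈ T, b t * gg t).totalDegree ≤ n0 :=
        (totalDegree_finset_sum _ _).trans (Finset.sup_le hbound)
      have h2 := totalDegree_add f (-(∑ t ∈ T, b t * gg t))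
      rw [totalDegree_neg] at h2
      simpa [hf', sub_eq_add_neg] using h2.trans (max_le le_rfl h1)
    have hf'comp : homogeneousComponent n0 f' = 0 := by
      rw [hf', map_sub, map_sum, Finset.sum_congr rfl hcomp, ← hstep, sub_self]
    by_cases hf'0 : f' = 0
    · refine ⟨b, by rw [← sub_eq_zero]; exact hf'0, hbound⟩
    have hf'lt : f'.totalDegree < n0 := by
      rcases lt_or_eq_of_le hf'deg with h | h
      · exact h
      · exact absurd (h ▸ hf'comp) (hc_top_ne_zero hf'0)
    obtain ⟨b', hb'sum, hb'deg⟩ := IH f'.totalDegree (by omega) f' hf'I le_rfl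
    refine ⟨fun t => b t + b' t, ?_, ?_⟩
    · have : f = f' + ∑ t ∈ T, b t * gg t := by rw [hf']; ring
      rw [this, hb'sum, ← Finset.sum_add_distrib]
      exact Finset.sum_congr rfl fun t _ => by ring
    · intro t ht
      have h1 := totalDegree_add (b t * gg t) (b' t * gg t)
      have h2 : (b t + b' t) * gg t = b t * gg t + b' t * gg t := by ring
      rw [h2]
      exact h1.trans (max_le (hbound t ht) ((hb'deg t ht).trans (le_of_lt hf'lt)))

end Aux

/-- The last fall degree `d_F`: the minimal `d` such that every `f` in the ideal
generated by `F` lies in `VSpace F (max d (deg f))` (`sInf ∅ = 0` by convention). -/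
noncomputable def lastFallDegree {k : Type*} [Field k] {m : ℕ}
    (F : Set (MvPolynomial (Fin m) k)) : ℕ :=
  sInf {d : ℕ | ∀ f ∈ Ideal.span F, f ∈ VSpace F (max d f.totalDegree)}

/-- The last fall degree is finite: there is `d ∈ ℕ` such that every
`f` in the ideal generated by `F` lies in `VSpace F (max d (deg f))`. -/
theorem lastFallDegree_finite {k : Type*} [Field k] {m : ℕ}
    (F : Set (MvPolynomial (Fin m) k)) (hF : F.Finite) :
    ∃ d : ℕ, ∀ f ∈ Ideal.span F, f ∈ VSpace F (max d f.totalDegree) := by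
  classical
  obtain ⟨T, gg, hggI, hrep⟩ := exists_good_generators F
  have hN : ∀ t ∈ T, ∃ N, gg t ∈ VSpace F N := fun t ht => exists_mem_VSpace (hggI t ht)
  choose! N hNmem using hN
  refine ⟨T.sup N, ?_⟩
  intro f hf
  obtain ⟨b, hsum, hbound⟩ := hrep f hf
  have key : ∑ t ∈ T, b t * gg t ∈ VSpace F (max (T.sup N) f.totalDegree) := by
    apply Submodule.sum_mem
    intro t ht
    have h1 : gg t ∈ VSpace F (max (T.sup N) f.totalDegree) :=
      VSpace_mono (le_trans (Finset.le_sup ht) (le_max_left _ _)) (hNmem t ht)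
    exact mul_mem_VSpace h1 (b t) ((hbound t ht).trans (le_max_right _ _))
  rw [← hsum] at key
  exact key
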